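/- With Φ_l as in the Steiner ETF construction and g_2 the last column of G, the matrix Φ̃_1 obtained by stacking Φ_2,...,Φ_k and √k·(I_v ⊗ g_2*) is a Naimark complement of Φ_1: the rows of [Φ_1; Φ̃_1] are pairwise orthogonal and all have squared norm k(r+1), and Φ̃_1 has b(k−1)+v = v(r+1) − b rows. -/

import Mathlib

open scoped Kronecker

/-- The Steiner ETF synthesis operator `Φ_l = (I_b ⊗ f_l*) Π (I_v ⊗ G₁*)`, where `f_l` is the
`l`-th column of `F` and `G₁` consists of the first `r` columns of `G`. -/
noncomputable def steinerPhi (v k r b : ℕ) (P : Matrix (Fin b × Fin k) (Fin v × Fin r) ℂ)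
    (F : Matrix (Fin k) (Fin k) ℂ) (G : Matrix (Fin (r + 1)) (Fin (r + 1)) ℂ) (l : Fin k) :
    Matrix (Fin b × Fin 1) (Fin v × Fin (r + 1)) ℂ :=
  ((1 : Matrix (Fin b) (Fin b) ℂ) ⊗ₖ (Matrix.of fun (_ : Fin 1) (p : Fin k) => star (F p l)))
    * P * ((1 : Matrix (Fin v) (Fin v) ℂ) ⊗ₖ (G.submatrix id Fin.castSucc).conjTranspose)

/-- The matrix obtained by stacking all the `Φ_l`, `l = 1, …, k`, together with
`√k (I_v ⊗ g₂*)`, where `g₂` is the last column of `G`.  Its rows are the rows of `Φ₁`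
(`l = 0`) together with those of the Naimark complement `Φ̃₁` of the paper. -/
noncomputable def steinerStack (v k r b : ℕ) (P : Matrix (Fin b × Fin k) (Fin v × Fin r) ℂ)
    (F : Matrix (Fin k) (Fin k) ℂ) (G : Matrix (Fin (r + 1)) (Fin (r + 1)) ℂ) :
    Matrix ((Fin k × (Fin b × Fin 1)) ⊕ (Fin v × Fin 1)) (Fin v × Fin (r + 1)) ℂ :=
  fun w c => match w with
    | Sum.inl (l, a) => steinerPhi v k r b P F G l a c
    | Sum.inr a => (Real.sqrt k : ℂ) *
        ((1 : Matrix (Fin v) (Fin v) ℂ) ⊗ₖ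
          (Matrix.of fun (_ : Fin 1) (s : Fin (r + 1)) => star (G s (Fin.last r)))) a c

lemma kron_conjTranspose {l m n p : Type*} (A : Matrix l m ℂ) (B : Matrix n p ℂ) :
    (A ⊗ₖ B).conjTranspose = A.conjTranspose ⊗ₖ B.conjTranspose := by
  ext ⟨a, c⟩ ⟨bb, d⟩
  simp [Matrix.conjTranspose_apply, Matrix.kroneckerMap_apply, star_mul']

lemma conjTranspose_mul_self_of {n : Type*} [Fintype n] [DecidableEq n]
    (A : Matrix n n ℂ) (c : ℂ) (hc : c ≠ 0) (h : A * A.conjTranspose = c • 1) :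
    A.conjTranspose * A = c • 1 := by
  have h1 : A * (c⁻¹ • A.conjTranspose) = 1 := by
    rw [Matrix.mul_smul, h, smul_smul, inv_mul_cancel₀ hc, one_smul]
  have h2 := mul_eq_one_comm.mp h1
  rw [Matrix.smul_mul] at h2
  calc A.conjTranspose * A = c • (c⁻¹ • (A.conjTranspose * A)) := by
        rw [smul_smul, mul_inv_cancel₀ hc, one_smul]
    _ = c • (1 : Matrix n n ℂ) := by rw [h2]

/-- **Naimark complement of a Steiner ETF.** Stacking `Φ₂, …, Φ_k` and `√k (I_v ⊗ g₂*)`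
yields a Naimark complement `Φ̃₁` of `Φ₁`:  all the rows of `[Φ₁; Φ̃₁]` are pairwise
orthogonal with squared norm `k(r+1)`, and `Φ̃₁` has `b(k−1) + v = v(r+1) − b` rows. -/
theorem steiner_naimark_complement (v k r b : ℕ) (hvk : k < v) (hk : 0 < k) (hb : 0 < b)
    (P : Matrix (Fin b × Fin k) (Fin v × Fin r) ℂ)
    (e : (Fin b × Fin k) ≃ (Fin v × Fin r))
    (hP : ∀ a c, P a c = if e a = c then 1 else 0)
    (hX01 : ∀ i j, (∑ p, ∑ q, P (i, p) (j, q)) = 0 ∨ (∑ p, ∑ q, P (i, p) (j, q)) = 1)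
    (hrow : ∀ i, ∑ j, ∑ p, ∑ q, P (i, p) (j, q) = (k : ℂ))
    (hcol : ∀ j, ∑ i, ∑ p, ∑ q, P (i, p) (j, q) = (r : ℂ))
    (hlam : ∀ j j' : Fin v, j ≠ j' →
      ∑ i, (∑ p, ∑ q, P (i, p) (j, q)) * (∑ p, ∑ q, P (i, p) (j', q)) = 1)
    (F : Matrix (Fin k) (Fin k) ℂ) (hFu : ∀ p l, ‖F p l‖ = 1)
    (hF : F * F.conjTranspose = (k : ℂ) • 1)
    (G : Matrix (Fin (r + 1)) (Fin (r + 1)) ℂ) (hGu : ∀ s t, ‖G s t‖ = 1)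
    (hG : G * G.conjTranspose = ((r : ℂ) + 1) • 1) :
    steinerStack v k r b P F G * (steinerStack v k r b P F G).conjTranspose =
        ((k : ℂ) * ((r : ℂ) + 1)) • 1 ∧
    b * (k - 1) + v = v * (r + 1) - b := by
  classical
  have hkc : (k : ℂ) ≠ 0 := Nat.cast_ne_zero.mpr hk.ne'
  have hrc : ((r : ℂ) + 1) ≠ 0 := by
    have := Nat.cast_add_one_ne_zero (R := ℂ) r
    push_cast at this
    exact this
  -- counting identity b k = v r
  have hbk : b * k = v * r := by
    have h1 : ∑ i : Fin b, ∑ j : Fin v, ∑ p, ∑ q, P (i, p) (j, q) = (b : ℂ) * k := by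
      simp [hrow, Finset.sum_const, Finset.card_univ, nsmul_eq_mul]
    have h2 : ∑ i : Fin b, ∑ j : Fin v, ∑ p, ∑ q, P (i, p) (j, q) = (v : ℂ) * r := by
      rw [Finset.sum_comm]
      simp [hcol, Finset.sum_const, Finset.card_univ, nsmul_eq_mul]
    have : ((b * k : ℕ) : ℂ) = ((v * r : ℕ) : ℂ) := by push_cast; rw [← h1, h2]
    exact_mod_cast this
  constructor
  · -- the matrix identity
    have hG' : G.conjTranspose * G = ((r : ℂ) + 1) • 1 := conjTranspose_mul_self_of G _ hrc hG
    have hF' : F.conjTranspose * F = (k : ℂ) • 1 := conjTranspose_mul_self_of F _ hkc hF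
    have hGel : ∀ x y : Fin (r + 1),
        ∑ s, star (G s x) * G s y = if x = y then (r : ℂ) + 1 else 0 := by
      intro x y
      have := congrFun (congrFun hG' x) y
      simpa [Matrix.mul_apply, Matrix.conjTranspose_apply, Matrix.smul_apply, Matrix.one_apply,
        mul_ite, mul_one, mul_zero] using this
    have hFel : ∀ l l' : Fin k,
        ∑ p, star (F p l) * F p l' = if l = l' then (k : ℂ) else 0 := by
      intro l l'
      have := congrFun (congrFun hF' l) l'
      simpa [Matrix.mul_apply, Matrix.conjTranspose_apply, Matrix.smul_apply, Matrix.one_apply,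
        mul_ite, mul_one, mul_zero] using this
    have hPP' : P * P.conjTranspose = 1 := by
      ext a a'
      simp only [Matrix.mul_apply, Matrix.conjTranspose_apply, hP, Matrix.one_apply]
      have hst : ∀ c, star (if e a' = c then (1:ℂ) else 0) = if e a' = c then 1 else 0 := by
        intro c; split_ifs <;> simp
      simp only [hst, mul_ite, mul_one, mul_zero, ite_mul, one_mul, zero_mul]
      rw [Finset.sum_ite_eq]
      simp [e.injective.eq_iff, eq_comm]
    -- notation for the blocks
    set N : Matrix (Fin 1) (Fin (r + 1)) ℂ :=
      Matrix.of fun _ s => star (G s (Fin.last r)) with hNdef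
    set Brow : Matrix (Fin v × Fin 1) (Fin v × Fin (r + 1)) ℂ :=
      (Real.sqrt k : ℂ) • ((1 : Matrix (Fin v) (Fin v) ℂ) ⊗ₖ N) with hBdef
    set A : Matrix (Fin k × (Fin b × Fin 1)) (Fin v × Fin (r + 1)) ℂ :=
      fun w c => steinerPhi v k r b P F G w.1 w.2 c with hAdef
    have hM : steinerStack v k r b P F G = Matrix.fromRows A Brow := by
      ext w c
      rcases w with ⟨l, a⟩ | a
      · rfl
      · rfl
    have hG₁G₁ : (G.submatrix id Fin.castSucc).conjTranspose * (G.submatrix id Fin.castSucc) =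
        ((r : ℂ) + 1) • 1 := by
      ext q q'
      simp only [Matrix.mul_apply, Matrix.conjTranspose_apply, Matrix.submatrix_apply,
        id_eq, Matrix.smul_apply, Matrix.one_apply]
      rw [hGel]
      simp [Fin.castSucc_inj]
    have hG₁N : (G.submatrix id Fin.castSucc).conjTranspose * N.conjTranspose = 0 := by
      ext q x
      simp only [Matrix.mul_apply, Matrix.conjTranspose_apply, hNdef,
        Matrix.submatrix_apply, id_eq, Matrix.of_apply, star_star, Matrix.zero_apply]
      rw [hGel]
      simp [(Fin.castSucc_lt_last q).ne]
    have hNN : N * N.conjTranspose = ((r : ℂ) + 1) • 1 := by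
      ext x y
      simp only [Matrix.mul_apply, Matrix.conjTranspose_apply, hNdef, Matrix.of_apply, star_star,
        Matrix.smul_apply, Matrix.one_apply]
      rw [hGel]
      simp [Subsingleton.elim x y]
    have hkron : ∀ l l' : Fin k, steinerPhi v k r b P F G l *
        (steinerPhi v k r b P F G l').conjTranspose =
        (if l = l' then (k : ℂ) * ((r : ℂ) + 1) else 0) • 1 := by
      intro l l'
      have key1 : ((1 : Matrix (Fin v) (Fin v) ℂ) ⊗ₖ (G.submatrix id Fin.castSucc).conjTranspose) *
          ((1 : Matrix (Fin v) (Fin v) ℂ) ⊗ₖ (G.submatrix id Fin.castSucc).conjTranspose).conjTranspose =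
          ((r : ℂ) + 1) • 1 := by
        rw [kron_conjTranspose, Matrix.conjTranspose_one, Matrix.conjTranspose_conjTranspose,
          ← Matrix.mul_kronecker_mul, Matrix.one_mul, hG₁G₁, Matrix.kronecker_smul,
          Matrix.one_kronecker_one]
      have key2 : ((1 : Matrix (Fin b) (Fin b) ℂ) ⊗ₖ
            (Matrix.of fun (_ : Fin 1) p => star (F p l))) *
          ((1 : Matrix (Fin b) (Fin b) ℂ) ⊗ₖ
            (Matrix.of fun (_ : Fin 1) p => star (F p l'))).conjTranspose =
          (if l = l' then (k : ℂ) else 0) • 1 := by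
        rw [kron_conjTranspose, Matrix.conjTranspose_one, ← Matrix.mul_kronecker_mul,
          Matrix.one_mul]
        have hsmall : (Matrix.of fun (_ : Fin 1) p => star (F p l)) *
            (Matrix.of fun (_ : Fin 1) p => star (F p l')).conjTranspose =
            (if l = l' then (k : ℂ) else 0) • 1 := by
          ext x y
          simp only [Matrix.mul_apply, Matrix.conjTranspose_apply, Matrix.of_apply, star_star,
            Matrix.smul_apply, Matrix.one_apply]
          rw [hFel]
          simp [Subsingleton.elim x y]
        rw [hsmall, Matrix.kronecker_smul, Matrix.one_kronecker_one]
      unfold steinerPhi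
      rw [Matrix.conjTranspose_mul, Matrix.conjTranspose_mul]
      simp only [Matrix.mul_assoc]
      rw [← Matrix.mul_assoc
          ((1 : Matrix (Fin v) (Fin v) ℂ) ⊗ₖ (G.submatrix id Fin.castSucc).conjTranspose), key1,
        Matrix.smul_mul, Matrix.one_mul, Matrix.mul_smul, ← Matrix.mul_assoc P, hPP',
        Matrix.one_mul, Matrix.mul_smul, key2, smul_smul]
      congr 1
      split_ifs <;> ring
    have hzero : ∀ l : Fin k,
        steinerPhi v k r b P F G l * Brow.conjTranspose = 0 := by
      intro l
      rw [hBdef, Matrix.conjTranspose_smul, kron_conjTranspose, Matrix.conjTranspose_one]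
      unfold steinerPhi
      rw [Matrix.mul_smul]
      simp only [Matrix.mul_assoc]
      rw [← Matrix.mul_kronecker_mul, Matrix.one_mul, hG₁N, Matrix.kronecker_zero]
      simp
    have hAA : A * A.conjTranspose = ((k : ℂ) * ((r : ℂ) + 1)) • 1 := by
      ext ⟨l, u⟩ ⟨l', u'⟩
      have h := congrFun (congrFun (hkron l l') u) u'
      simp only [Matrix.mul_apply, Matrix.conjTranspose_apply] at h ⊢
      simp only [hAdef]
      rw [h]
      simp only [Matrix.smul_apply, Matrix.one_apply, Prod.mk.injEq]
      by_cases h1 : l = l' <;> by_cases h2 : u = u' <;>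
        simp [h1, h2, Prod.ext_iff] <;> tauto
    have hAB : A * Brow.conjTranspose = 0 := by
      ext ⟨l, u⟩ x
      have h := congrFun (congrFun (hzero l) u) x
      simp only [Matrix.mul_apply, Matrix.conjTranspose_apply] at h ⊢
      simp only [hAdef]
      rw [h]
      simp
    have hBA : Brow * A.conjTranspose = 0 := by
      have : Brow * A.conjTranspose = (A * Brow.conjTranspose).conjTranspose := by
        rw [Matrix.conjTranspose_mul, Matrix.conjTranspose_conjTranspose]
      rw [this, hAB, Matrix.conjTranspose_zero]
    have hBB : Brow * Brow.conjTranspose = ((k : ℂ) * ((r : ℂ) + 1)) • 1 := by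
      rw [hBdef, Matrix.conjTranspose_smul, Matrix.smul_mul, Matrix.mul_smul, smul_smul,
        kron_conjTranspose, Matrix.conjTranspose_one, ← Matrix.mul_kronecker_mul, Matrix.one_mul,
        hNN, Matrix.kronecker_smul, Matrix.one_kronecker_one, smul_smul]
      congr 1
      have h1 : star ((Real.sqrt k : ℝ) : ℂ) = ((Real.sqrt k : ℝ) : ℂ) := by
        simp [Complex.star_def, Complex.conj_ofReal]
      rw [h1, ← Complex.ofReal_mul, Real.mul_self_sqrt (Nat.cast_nonneg k)]
      push_cast
      ring
    rw [hM, Matrix.conjTranspose_fromRows_eq_fromCols_conjTranspose,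
      Matrix.fromRows_mul_fromCols, hAA, hAB, hBA, hBB, ← Matrix.fromBlocks_one,
      Matrix.fromBlocks_smul, smul_zero, smul_zero]
  · -- the counting identity
    obtain ⟨k', rfl⟩ : ∃ k', k = k' + 1 := ⟨k - 1, (Nat.succ_pred_eq_of_pos hk).symm⟩
    rw [Nat.mul_succ] at hbk
    simp only [Nat.add_sub_cancel]
    have h6 : v * (r + 1) = v * r + v := by ring
    omega
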